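/- Let ξ ∈ H and let k ≥ 0 be a constant. The following are equivalent: (i) for every η ∈ H, the coefficient function c_{ξη} lies in L²(G) and ‖c_{ξη}‖₂ ≤ k‖η‖; (ii) for every g ∈ L¹(G) ∩ L²(G), ‖U_g ξ‖ ≤ k‖g‖₂, where U_g ξ := ∫ g(x) U_x ξ dx (Bochner integral in H). -/

import Mathlib

open MeasureTheory
open scoped InnerProductSpace

lemma stmt9_enorm_sq_eq (z : ℂ) : ‖z‖ₑ ^ (2:ℝ) = ENNReal.ofReal (‖z‖^2) := by
  rw [show ((2:ℝ)) = ((2:ℕ):ℝ) by norm_num, ENNReal.rpow_natCast,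
    ← ofReal_norm, ← ENNReal.ofReal_pow (norm_nonneg z)]

lemma stmt9_sq_le {a M : ℝ} (ha : 0 ≤ a) (hM : 0 ≤ M) (h : a ≤ M * Real.sqrt a) :
    a ≤ M ^ 2 := by
  nlinarith [Real.sq_sqrt ha, Real.sqrt_nonneg a, sq_nonneg (Real.sqrt a - M)]

/-- For a strongly continuous unitary representation `U` of `G` on `H`,
`ξ ∈ H` and `k ≥ 0`, the following are equivalent: (i) every coefficient function
`c_{ξη}(x) = ⟪U_x ξ, η⟫` lies in `L²(G)` with `‖c_{ξη}‖₂ ≤ k‖η‖`; (ii) for every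
`g ∈ L¹(G) ∩ L²(G)`, `‖U_g ξ‖ ≤ k‖g‖₂` where `U_g ξ = ∫ g(x) U_x ξ dx`. -/
theorem stmt9
    {G : Type*} [Group G] [TopologicalSpace G] [IsTopologicalGroup G]
    [LocallyCompactSpace G] [MeasurableSpace G] [BorelSpace G]
    (μ : Measure G) [μ.IsHaarMeasure]
    {H : Type*} [NormedAddCommGroup H] [InnerProductSpace ℂ H] [CompleteSpace H]
    (U : G →* (H ≃ₗᵢ[ℂ] H))
    (hU : ∀ ξ : H, Continuous fun x => U x ξ)
    (ξ : H) (k : ℝ) (hk : 0 ≤ k) :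
    (∀ η : H,
        MemLp (fun x => ⟪U x ξ, η⟫_ℂ) 2 μ ∧
        eLpNorm (fun x => ⟪U x ξ, η⟫_ℂ) 2 μ ≤ ENNReal.ofReal (k * ‖η‖)) ↔
    (∀ g : G → ℂ, Integrable g μ → MemLp g 2 μ →
        ‖∫ x, g x • (U x ξ) ∂μ‖ ≤ k * (eLpNorm g 2 μ).toReal) := by
  have hUiso : ∀ (x : G) (w : H), ‖U x w‖ = ‖w‖ := fun x w => (U x).norm_map w
  constructor
  · -- (i) → (ii)
    intro hi g hg hg2
    by_cases hint : Integrable (fun x => g x • U x ξ) μ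
    swap
    · rw [integral_undef hint, norm_zero]; positivity
    set v := ∫ x, g x • U x ξ ∂μ with hv
    obtain ⟨hmem, hnorm⟩ := hi v
    set c' : G → ℂ := fun x => ⟪U x ξ, v⟫_ℂ with hc'
    have h1 : ∀ w : H, (⟪w, v⟫_ℂ) =
        ∫ x, g x * (starRingEnd ℂ) ⟪U x ξ, w⟫_ℂ ∂μ := by
      intro w
      rw [hv, ← innerSL_apply_apply (𝕜 := ℂ) w,
        ← ContinuousLinearMap.integral_comp_comm (innerSL ℂ w) hint]
      refine integral_congr_ae (Filter.Eventually.of_forall fun x => ?_)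
      show ⟪w, g x • U x ξ⟫_ℂ = _
      rw [inner_smul_right, ← inner_conj_symm w (U x ξ)]
    have hcs : ‖∫ x, g x * (starRingEnd ℂ) (c' x) ∂μ‖ ≤
        (eLpNorm g 2 μ).toReal * (eLpNorm c' 2 μ).toReal := by
      set gL := hg2.toLp g with hgL
      set cL := hmem.toLp c' with hcL
      have hinner : ⟪gL, cL⟫_ℂ = ∫ x, (starRingEnd ℂ) (g x) * c' x ∂μ := by
        rw [L2.inner_def]
        refine integral_congr_ae ?_
        filter_upwards [MemLp.coeFn_toLp hg2, MemLp.coeFn_toLp hmem] with x ha hb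
        rw [RCLike.inner_apply, ha, hb, mul_comm]
      have heq : ∫ x, g x * (starRingEnd ℂ) (c' x) ∂μ = (starRingEnd ℂ) ⟪gL, cL⟫_ℂ := by
        rw [hinner, ← integral_conj]
        refine integral_congr_ae (Filter.Eventually.of_forall fun x => ?_)
        simp [mul_comm]
      rw [heq, RCLike.norm_conj]
      calc ‖⟪gL, cL⟫_ℂ‖ ≤ ‖gL‖ * ‖cL‖ := norm_inner_le_norm _ _
        _ = (eLpNorm g 2 μ).toReal * (eLpNorm c' 2 μ).toReal := by
            rw [hgL, hcL, Lp.norm_toLp, Lp.norm_toLp]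
    have hsq : ‖v‖^2 = ‖(⟪v, v⟫_ℂ)‖ := by
      rw [@inner_self_eq_norm_sq_to_K ℂ]
      simp [norm_pow]
    have hc'le : (eLpNorm c' 2 μ).toReal ≤ k * ‖v‖ := by
      have h := ENNReal.toReal_mono ENNReal.ofReal_ne_top hnorm
      rwa [ENNReal.toReal_ofReal (by positivity)] at h
    have hmain : ‖v‖^2 ≤ (eLpNorm g 2 μ).toReal * (k * ‖v‖) := by
      rw [hsq, h1 v]
      exact hcs.trans (mul_le_mul_of_nonneg_left hc'le ENNReal.toReal_nonneg)
    rcases eq_or_lt_of_le (norm_nonneg v) with h0 | hpos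
    · rw [← h0]; positivity
    · nlinarith [ENNReal.toReal_nonneg (a := eLpNorm g 2 μ)]
  · -- (ii) → (i)
    intro h2 η
    set c : G → ℂ := fun x => ⟪U x ξ, η⟫_ℂ with hc
    have hc_cont : Continuous c := Continuous.inner (hU ξ) continuous_const
    have hbound : ∀ x, ‖c x‖ ≤ ‖ξ‖ * ‖η‖ := fun x => by
      refine (norm_inner_le_norm _ _).trans ?_
      rw [hUiso]
    have hccont2 : Continuous fun x => c x • U x ξ := hc_cont.smul (hU ξ)
    set f : G → ENNReal := fun x => ENNReal.ofReal (‖c x‖^2) with hf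
    have hfmeas : Measurable f := (hc_cont.norm.pow 2).measurable.ennreal_ofReal
    set M : ℝ := k * ‖η‖ with hM
    have hM0 : 0 ≤ M := by positivity
    -- a.e.-strong-measurability of the vector integrand, for σ-compactly covered S
    have hsep : ∀ S : Set G, MeasurableSet S →
        (∃ L : ℕ → Set G, (∀ i, IsCompact (L i)) ∧ S ⊆ ⋃ i, L i) →
        AEStronglyMeasurable (fun x => S.indicator c x • U x ξ) μ := by
      rintro S hSm ⟨L, hLc, hSL⟩
      borelize H
      have heq : (fun x => S.indicator c x • U x ξ)
          = S.indicator (fun x => c x • U x ξ) := by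
        funext x
        by_cases hx : x ∈ S
        · simp [Set.indicator_of_mem hx]
        · simp [Set.indicator_of_notMem hx]
      rw [heq]
      refine (stronglyMeasurable_iff_measurable_separable.mpr ⟨?_, ?_⟩).aestronglyMeasurable
      · exact hccont2.measurable.indicator hSm
      · refine TopologicalSpace.IsSeparable.mono ?_
          (?_ : _ ⊆ insert 0 (⋃ i, (fun x => c x • U x ξ) '' L i))
        · rw [Set.insert_eq]
          exact ((Set.countable_singleton (0:H)).isSeparable).union
            (TopologicalSpace.isSeparable_iUnion.mpr fun i =>
              ((hLc i).image hccont2).isSeparable)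
        · rintro y ⟨x, rfl⟩
          by_cases hx : x ∈ S
          · obtain ⟨i, hxi⟩ := Set.mem_iUnion.mp (hSL hx)
            refine Set.mem_insert_iff.mpr (Or.inr (Set.mem_iUnion.mpr ⟨i, ⟨x, hxi, ?_⟩⟩))
            simp [Set.indicator_of_mem hx]
          · simp [Set.indicator_of_notMem hx]
    -- Step A: the key estimate on finite-measure σ-compactly covered sets
    have key : ∀ S : Set G, MeasurableSet S → μ S < ⊤ →
        (∃ L : ℕ → Set G, (∀ i, IsCompact (L i)) ∧ S ⊆ ⋃ i, L i) →
        ∫⁻ x in S, f x ∂μ ≤ ENNReal.ofReal (M^2) := by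
      intro S hSm hSfin hScov
      set g : G → ℂ := S.indicator c with hgdef
      set J := ∫⁻ x in S, f x ∂μ with hJ
      have hJfin : J < ⊤ := by
        calc J ≤ ∫⁻ _x in S, ENNReal.ofReal ((‖ξ‖*‖η‖)^2) ∂μ := by
              refine setLIntegral_mono measurable_const fun x _ => ?_
              exact ENNReal.ofReal_le_ofReal
                (by nlinarith [hbound x, norm_nonneg (c x)])
          _ = ENNReal.ofReal ((‖ξ‖*‖η‖)^2) * μ S := setLIntegral_const _ _
          _ < ⊤ := ENNReal.mul_lt_top ENNReal.ofReal_lt_top hSfin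
      have hg_nnorm : ∀ x, ‖g x‖ₑ ^ (2:ℝ) = S.indicator f x := by
        intro x
        by_cases hx : x ∈ S
        · rw [hgdef, Set.indicator_of_mem hx, Set.indicator_of_mem hx, stmt9_enorm_sq_eq]
        · rw [hgdef, Set.indicator_of_notMem hx, Set.indicator_of_notMem hx]
          simp [ENNReal.rpow_eq_zero_iff]
      have hsnorm : eLpNorm g 2 μ = J ^ (1/2 : ℝ) := by
        rw [eLpNorm_eq_lintegral_rpow_enorm_toReal (by norm_num) (by norm_num)]
        simp only [ENNReal.toReal_ofNat]
        rw [lintegral_congr hg_nnorm, lintegral_indicator hSm, hJ]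
      have hgmem : MemLp g 2 μ := by
        refine ⟨((hc_cont.measurable).indicator hSm).aestronglyMeasurable, ?_⟩
        rw [hsnorm]
        exact ENNReal.rpow_lt_top_of_nonneg (by norm_num) hJfin.ne
      have hgint : Integrable g μ := by
        rw [hgdef, integrable_indicator_iff hSm]
        haveI : IsFiniteMeasure (μ.restrict S) :=
          ⟨by rwa [Measure.restrict_apply_univ]⟩
        exact Integrable.mono' (integrable_const (‖ξ‖*‖η‖))
          hc_cont.aestronglyMeasurable.restrict
          (Filter.Eventually.of_forall hbound)
      have hint : Integrable (fun x => g x • U x ξ) μ := by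
        refine Integrable.mono' (hgint.norm.mul_const ‖ξ‖) (hsep S hSm hScov) ?_
        filter_upwards with x
        rw [norm_smul, hUiso]
      have hv := h2 g hgint hgmem
      set v := ∫ x, g x • U x ξ ∂μ with hvdef
      have hreal : ∫ x in S, ‖c x‖^2 ∂μ = J.toReal := by
        rw [hJ, ← integral_toReal (hfmeas.aemeasurable)
          (Filter.Eventually.of_forall fun x => ENNReal.ofReal_lt_top)]
        exact integral_congr_ae (Filter.Eventually.of_forall fun x =>
          (ENNReal.toReal_ofReal (by positivity)).symm)
      have hinner : ⟪η, v⟫_ℂ = ((J.toReal : ℝ) : ℂ) := by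
        rw [hvdef, ← innerSL_apply_apply (𝕜 := ℂ) η,
          ← ContinuousLinearMap.integral_comp_comm (innerSL ℂ η) hint]
        have hpt : ∀ x, (innerSL ℂ η) (g x • U x ξ) =
            ((S.indicator (fun y => ‖c y‖^2) x : ℝ) : ℂ) := by
          intro x
          show ⟪η, g x • U x ξ⟫_ℂ = _
          rw [inner_smul_right, ← inner_conj_symm η (U x ξ)]
          by_cases hx : x ∈ S
          · rw [hgdef, Set.indicator_of_mem hx, Set.indicator_of_mem hx,
              Complex.mul_conj]
            norm_cast
            rw [Complex.normSq_eq_norm_sq]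
          · rw [hgdef, Set.indicator_of_notMem hx, Set.indicator_of_notMem hx]
            simp
        have hLI : ∫ a, ((S.indicator (fun y => ‖c y‖^2) a : ℝ) : ℂ) ∂μ
            = ((∫ a, S.indicator (fun y => ‖c y‖^2) a ∂μ : ℝ) : ℂ) :=
          Complex.ofRealLI.integral_comp_comm _
        rw [integral_congr_ae (Filter.Eventually.of_forall hpt), hLI,
          integral_indicator hSm, hreal]
      have h4 : (eLpNorm g 2 μ).toReal = Real.sqrt J.toReal := by
        rw [hsnorm, ← ENNReal.toReal_rpow, Real.sqrt_eq_rpow]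
      have hJle : J.toReal ≤ M * Real.sqrt J.toReal := by
        have e1 : J.toReal = ‖(⟪η, v⟫_ℂ)‖ := by
          rw [hinner, Complex.norm_real, Real.norm_eq_abs,
            abs_of_nonneg ENNReal.toReal_nonneg]
        calc J.toReal = ‖(⟪η, v⟫_ℂ)‖ := e1
          _ ≤ ‖η‖ * ‖v‖ := norm_inner_le_norm _ _
          _ ≤ ‖η‖ * (k * (eLpNorm g 2 μ).toReal) :=
              mul_le_mul_of_nonneg_left hv (norm_nonneg η)
          _ = M * Real.sqrt J.toReal := by rw [h4, hM]; ring
      have hfin := stmt9_sq_le ENNReal.toReal_nonneg hM0 hJle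
      calc J = ENNReal.ofReal J.toReal := (ENNReal.ofReal_toReal hJfin.ne).symm
        _ ≤ ENNReal.ofReal (M^2) := ENNReal.ofReal_le_ofReal hfin
    -- Step B: superlevel sets
    set A : ℕ → Set G := fun n => {x | 1/((n:ℝ)+1) < ‖c x‖} with hA
    have hAopen : ∀ n, IsOpen (A n) := fun n =>
      isOpen_lt continuous_const hc_cont.norm
    have hAmeas : ∀ n, MeasurableSet (A n) := fun n => (hAopen n).measurableSet
    have hAmono : Monotone A := by
      intro n m hnm x hx
      have hx' : 1/((n:ℝ)+1) < ‖c x‖ := hx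
      show 1/((m:ℝ)+1) < ‖c x‖
      have hle : ((n:ℝ)+1) ≤ ((m:ℝ)+1) := by
        have : (n:ℝ) ≤ m := Nat.cast_le.mpr hnm
        linarith
      exact lt_of_le_of_lt (one_div_le_one_div_of_le (by positivity) hle) hx'
    have happrox : ∀ n : ℕ, μ (A n) < ⊤ ∧ ∃ E : Set G, MeasurableSet E ∧ E ⊆ A n ∧
        μ (A n \ E) = 0 ∧
        ∃ L : ℕ → Set G, (∀ i, IsCompact (L i)) ∧ E ⊆ ⋃ i, L i := by
      intro n
      set ε : ℝ := 1/((n:ℝ)+1) with hε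
      have hεpos : 0 < ε := by positivity
      set ν : Measure G := Measure.haar with hν
      have hclosed : IsClosed {x | ε ≤ ‖c x‖} :=
        isClosed_le continuous_const hc_cont.norm
      set C : ENNReal := ENNReal.ofReal (M^2) / ENNReal.ofReal (ε^2) with hC
      have hCfin : C < ⊤ := ENNReal.div_lt_top ENNReal.ofReal_ne_top
        (by simp only [ne_eq, ENNReal.ofReal_eq_zero, not_le]; positivity)
      have hcomp : ∀ K : Set G, K ⊆ A n → IsCompact K →
          ν K ≤ (Measure.haarScalarFactor ν μ : ENNReal) * C := by
        intro K hKA hK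
        have hKc : IsCompact (closure K) := hK.closure
        have hKsub : closure K ⊆ {x | ε ≤ ‖c x‖} :=
          closure_minimal (fun x hx => le_of_lt (show ε < ‖c x‖ from hKA hx)) hclosed
        have hKm : MeasurableSet (closure K) := isClosed_closure.measurableSet
        have hKfin : μ (closure K) < ⊤ := hKc.measure_lt_top
        have h1 : ENNReal.ofReal (ε^2) * μ (closure K) ≤ ENNReal.ofReal (M^2) := by
          calc ENNReal.ofReal (ε^2) * μ (closure K)
              = ∫⁻ _x in closure K, ENNReal.ofReal (ε^2) ∂μ :=
                (setLIntegral_const _ _).symm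
            _ ≤ ∫⁻ x in closure K, f x ∂μ := by
                refine setLIntegral_mono hfmeas fun x hx => ?_
                have hx' : ε ≤ ‖c x‖ := hKsub hx
                exact ENNReal.ofReal_le_ofReal (by nlinarith)
            _ ≤ ENNReal.ofReal (M^2) :=
                key _ hKm hKfin ⟨fun _ => closure K, fun _ => hKc,
                  by intro x hx; exact Set.mem_iUnion.mpr ⟨0, hx⟩⟩
        have h2' : μ (closure K) ≤ C := by
          rw [hC, ENNReal.le_div_iff_mul_le
            (Or.inl (by simp only [ne_eq, ENNReal.ofReal_eq_zero, not_le]; positivity))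
            (Or.inl ENNReal.ofReal_ne_top)]
          rwa [mul_comm]
        calc ν K ≤ ν (closure K) := measure_mono subset_closure
          _ = (Measure.haarScalarFactor ν μ : ENNReal) * μ (closure K) := by
              have := Measure.measure_isMulInvariant_eq_smul_of_isCompact_closure ν μ
                (s := closure K) (by rwa [closure_closure])
              simpa [ENNReal.smul_def] using this
          _ ≤ (Measure.haarScalarFactor ν μ : ENNReal) * C := by gcongr
      have hνA : ν (A n) < ⊤ := by
        rw [(hAopen n).measure_eq_iSup_isCompact ν]
        refine lt_of_le_of_lt
          (iSup_le fun K => iSup_le fun hKA => iSup_le fun hK => hcomp K hKA hK) ?_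
        exact ENNReal.mul_lt_top ENNReal.coe_lt_top hCfin
      have hμA : μ (A n) = (Measure.haarScalarFactor μ ν : ENNReal) * ν (A n) := by
        have := Measure.measure_isHaarMeasure_eq_smul_of_isOpen μ ν (hAopen n)
        simpa [ENNReal.smul_def] using this
      refine ⟨by rw [hμA]; exact ENNReal.mul_lt_top ENNReal.coe_lt_top hνA, ?_⟩
      -- construct the compact approximation E
      have hKex : ∀ i : ℕ, ∃ K : Set G, K ⊆ A n ∧ IsCompact K ∧
          ν (A n) ≤ ν K + ((i:ENNReal) + 1)⁻¹ := by
        intro i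
        rcases eq_or_ne (ν (A n)) 0 with h0 | h0
        · exact ⟨∅, Set.empty_subset _, isCompact_empty, by simp [h0]⟩
        · have hlt : ν (A n) - ((i:ENNReal) + 1)⁻¹ < ν (A n) :=
            ENNReal.sub_lt_self hνA.ne h0 (by simp)
          obtain ⟨K, hKA, hKc, hK⟩ := (hAopen n).exists_lt_isCompact hlt
          exact ⟨K, hKA, hKc, tsub_le_iff_right.mp hK.le⟩
      choose K hKA hKc hKb using hKex
      set E : Set G := A n ∩ ⋃ i, closure (K i) with hE
      have hEm : MeasurableSet E := (hAmeas n).inter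
        (MeasurableSet.iUnion fun i => isClosed_closure.measurableSet)
      have hEsub : E ⊆ A n := Set.inter_subset_left
      have hdiff : ∀ i : ℕ, μ (A n \ E) ≤
          (Measure.haarScalarFactor μ ν : ENNReal) * ((i:ENNReal) + 1)⁻¹ := by
        intro i
        have hop : IsOpen (A n \ closure (K i)) := (hAopen n).sdiff isClosed_closure
        have hsub1 : A n \ E ⊆ A n \ closure (K i) := by
          intro x hx
          exact ⟨hx.1, fun hxc => hx.2 ⟨hx.1, Set.mem_iUnion.mpr ⟨i, hxc⟩⟩⟩
        have hsplit : ν (A n ∩ closure (K i)) + ν (A n \ closure (K i)) = ν (A n) :=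
          measure_inter_add_diff _ isClosed_closure.measurableSet
        have hKle : ν (K i) ≤ ν (A n ∩ closure (K i)) :=
          measure_mono (Set.subset_inter (hKA i) subset_closure)
        have hfin2 : ν (A n ∩ closure (K i)) ≠ ⊤ :=
          (lt_of_le_of_lt (measure_mono Set.inter_subset_left) hνA).ne
        have h3 : ν (A n \ closure (K i)) ≤ ((i:ENNReal) + 1)⁻¹ := by
          have hchain : ν (A n ∩ closure (K i)) + ν (A n \ closure (K i)) ≤
              ν (A n ∩ closure (K i)) + ((i:ENNReal) + 1)⁻¹ := by
            rw [hsplit]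
            exact (hKb i).trans (add_le_add_left hKle _)
          exact (ENNReal.add_le_add_iff_left hfin2).mp hchain
        have h2'' : μ (A n \ closure (K i)) =
            (Measure.haarScalarFactor μ ν : ENNReal) * ν (A n \ closure (K i)) := by
          have := Measure.measure_isHaarMeasure_eq_smul_of_isOpen μ ν hop
          simpa [ENNReal.smul_def] using this
        calc μ (A n \ E) ≤ μ (A n \ closure (K i)) := measure_mono hsub1
          _ = (Measure.haarScalarFactor μ ν : ENNReal) * ν (A n \ closure (K i)) := h2''
          _ ≤ _ := by gcongr
      have hzero : μ (A n \ E) = 0 := by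
        refine le_antisymm ?_ (zero_le)
        have ht1 : Filter.Tendsto (fun i : ℕ => ((i:ENNReal) + 1)⁻¹)
            Filter.atTop (nhds 0) := by
          have := ENNReal.tendsto_inv_nat_nhds_zero.comp (Filter.tendsto_add_atTop_nat 1)
          convert this using 2 with i
          simp [Function.comp]
        have ht2 : Filter.Tendsto
            (fun i : ℕ => (Measure.haarScalarFactor μ ν : ENNReal) * ((i:ENNReal) + 1)⁻¹)
            Filter.atTop (nhds 0) := by
          have := ENNReal.Tendsto.const_mul ht1
            (Or.inr (ENNReal.coe_ne_top (r := Measure.haarScalarFactor μ ν)))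
          simpa using this
        exact ge_of_tendsto' ht2 hdiff
      exact ⟨E, hEm, hEsub, hzero, ⟨fun i => closure (K i), fun i => (hKc i).closure,
        Set.inter_subset_right⟩⟩
    -- Step C: monotone convergence
    have hsup : ∫⁻ x, f x ∂μ ≤ ENNReal.ofReal (M^2) := by
      have hfeq : ∀ x, f x = ⨆ n, (A n).indicator f x := by
        intro x
        refine le_antisymm ?_ (iSup_le fun n => Set.indicator_le_self _ _ x)
        rcases eq_or_ne (c x) 0 with h0 | h0
        · simp [hf, h0]
        · obtain ⟨n, hn⟩ := exists_nat_one_div_lt (norm_pos_iff.mpr h0)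
          have hx : x ∈ A n := hn
          exact le_iSup_of_le n (by rw [Set.indicator_of_mem hx])
      have hstep : ∀ n, ∫⁻ x in A n, f x ∂μ ≤ ENNReal.ofReal (M^2) := by
        intro n
        obtain ⟨hfin, E, hEm, hEsub, hzero, hcov⟩ := happrox n
        have hae : (A n : Set G) =ᵐ[μ] E := by
          rw [ae_eq_set]
          exact ⟨hzero, by rw [Set.diff_eq_empty.mpr hEsub]; exact measure_empty⟩
        rw [setLIntegral_congr hae]
        exact key E hEm (lt_of_le_of_lt (measure_mono hEsub) hfin) hcov
      calc ∫⁻ x, f x ∂μ = ⨆ n, ∫⁻ x, (A n).indicator f x ∂μ := by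
            rw [lintegral_congr hfeq]
            exact lintegral_iSup (fun n => hfmeas.indicator (hAmeas n))
              (fun n m h x => Set.indicator_le_indicator_of_subset (hAmono h)
                (fun _ => zero_le) x)
        _ ≤ ENNReal.ofReal (M^2) := by
            refine iSup_le fun n => ?_
            rw [lintegral_indicator (hAmeas n)]
            exact hstep n
    have hsnormc : eLpNorm c 2 μ ≤ ENNReal.ofReal M := by
      rw [eLpNorm_eq_lintegral_rpow_enorm_toReal (by norm_num) (by norm_num)]
      simp only [ENNReal.toReal_ofNat]
      rw [lintegral_congr fun x => stmt9_enorm_sq_eq (c x)]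
      calc (∫⁻ x, f x ∂μ) ^ (1/2:ℝ)
          ≤ (ENNReal.ofReal (M^2)) ^ (1/2:ℝ) :=
            ENNReal.rpow_le_rpow hsup (by norm_num)
        _ = ENNReal.ofReal M := by
            rw [← Real.rpow_natCast M 2,
              ← ENNReal.ofReal_rpow_of_nonneg hM0 (by norm_num),
              ← ENNReal.rpow_mul]
            norm_num
    exact ⟨⟨hc_cont.aestronglyMeasurable,
      lt_of_le_of_lt hsnormc ENNReal.ofReal_lt_top⟩, hsnormc⟩
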